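/- Let 1 ≤ H ≤ X, let R ∈ ℕ, and let x_1, …, x_R ∈ [1, X] be H-separated real numbers (i.e. |x_i − x_j| ≥ H for all i ≠ j). Then ∫_{|t| ≤ X/H} |∑_{n=1}^R exp(2πi t log x_n)|^2 dt ≪ R · X/H, with an absolute implied constant. -/

import Mathlib

open Real Finset

lemma sum_inv_sq (K : ℕ) : ∑ k ∈ Finset.range K, (1:ℝ)/((k:ℝ)+1)^2 ≤ 2 := by
  have h : ∀ K : ℕ, ∑ k ∈ Finset.range K, (1:ℝ)/((k:ℝ)+1)^2 ≤ 2 - 2/((K:ℝ)+1) := by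
    intro K
    induction K with
    | zero => simp
    | succ n ih =>
      rw [Finset.sum_range_succ]
      have hn : (0:ℝ) < (n:ℝ)+1 := by positivity
      have hn2 : (0:ℝ) < (n:ℝ)+2 := by positivity
      have key : (1:ℝ)/((n:ℝ)+1)^2 ≤ 2/((n:ℝ)+1) - 2/((n:ℝ)+2) := by
        rw [div_sub_div _ _ (ne_of_gt hn) (ne_of_gt hn2), div_le_div_iff₀ (by positivity) (by positivity)]
        ring_nf
        nlinarith [sq_nonneg ((n:ℝ)+1)]
      push_cast
      have e : ((n:ℝ)+1+1) = (n:ℝ)+2 := by ring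
      rw [e]
      linarith
  calc _ ≤ 2 - 2/((K:ℝ)+1) := h K
    _ ≤ 2 := by
        have : (0:ℝ) < (K:ℝ)+1 := by positivity
        have : (0:ℝ) ≤ 2/((K:ℝ)+1) := by positivity
        linarith

lemma offdiag_sum {R : ℕ} (θ : Fin R → ℝ) (δ : ℝ) (hδ : 0 < δ)
    (hsep : ∀ i j, i ≠ j → δ ≤ |θ i - θ j|) (m : Fin R) :
    ∑ n ∈ Finset.univ.erase m, 1/(θ m - θ n)^2 ≤ 4/δ^2 := by
  classical
  set s := Finset.univ.erase m with hs
  set k : Fin R → ℕ := fun n => ⌊|θ n - θ m|/δ⌋₊ with hk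
  set f : Fin R → ℕ × Bool := fun n => (k n, decide (θ m < θ n)) with hf
  set g : ℕ × Bool → ℝ := fun p => if p.1 = 0 then 0 else (1/δ^2) * (1/(p.1:ℝ)^2) with hg
  -- basic facts for n ∈ s
  have hms : ∀ n ∈ s, n ≠ m := fun n hn => Finset.ne_of_mem_erase hn
  have hdist : ∀ n ∈ s, δ ≤ |θ n - θ m| := fun n hn => hsep n m (hms n hn)
  have hk1 : ∀ n ∈ s, 1 ≤ k n := by
    intro n hn
    rw [hk]
    apply Nat.le_floor
    rw [Nat.cast_one, le_div_iff₀ hδ, one_mul]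
    exact hdist n hn
  have hklow : ∀ n, (k n : ℝ) * δ ≤ |θ n - θ m| := by
    intro n
    have := Nat.floor_le (a := |θ n - θ m|/δ) (by positivity)
    calc (k n : ℝ) * δ ≤ (|θ n - θ m|/δ) * δ := by
          apply mul_le_mul_of_nonneg_right this hδ.le
      _ = |θ n - θ m| := by field_simp
  have hkhigh : ∀ n, |θ n - θ m| < ((k n : ℝ) + 1) * δ := by
    intro n
    have := Nat.lt_floor_add_one (|θ n - θ m|/δ)
    calc |θ n - θ m| = (|θ n - θ m|/δ) * δ := by field_simp
      _ < ((k n : ℝ) + 1) * δ := by apply mul_lt_mul_of_pos_right this hδ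
  -- step 1: pointwise bound
  have step1 : ∀ n ∈ s, 1/(θ m - θ n)^2 ≤ g (f n) := by
    intro n hn
    have h1 : 1 ≤ k n := hk1 n hn
    have hkne : k n ≠ 0 := by omega
    have hkpos : (0:ℝ) < (k n : ℝ) * δ := by
      have : (1:ℝ) ≤ (k n : ℝ) := by exact_mod_cast h1
      nlinarith
    have hle : ((k n : ℝ) * δ)^2 ≤ (θ m - θ n)^2 := by
      have h2 := hklow n
      have : (θ m - θ n)^2 = |θ n - θ m|^2 := by
        rw [sq_abs]; ring
      rw [this]
      nlinarith [abs_nonneg (θ n - θ m)]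
    have : 1/(θ m - θ n)^2 ≤ 1/((k n : ℝ) * δ)^2 :=
      one_div_le_one_div_of_le (by positivity) hle
    calc 1/(θ m - θ n)^2 ≤ 1/((k n : ℝ) * δ)^2 := this
      _ = g (f n) := by
          rw [hg]
          simp only [hf, hkne, if_false]
          field_simp
  -- injectivity on s
  have hinj : Set.InjOn f s := by
    intro a ha b hb hab
    by_contra hne
    have hsepab := hsep a b hne
    have hkk : k a = k b := by
      have := congrArg Prod.fst hab; simpa [hf] using this
    have hbool : (θ m < θ a) = (θ m < θ b) := by
      have := congrArg Prod.snd hab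
      simpa [hf, decide_eq_decide] using this
    have hra : (k a : ℝ) * δ ≤ |θ a - θ m| := hklow a
    have hrb : (k b : ℝ) * δ ≤ |θ b - θ m| := hklow b
    have hra' : |θ a - θ m| < ((k a : ℝ) + 1) * δ := hkhigh a
    have hrb' : |θ b - θ m| < ((k b : ℝ) + 1) * δ := hkhigh b
    have hdiff : |(|θ a - θ m|) - (|θ b - θ m|)| < δ := by
      rw [abs_sub_lt_iff]
      constructor <;> nlinarith [hkk ▸ hra, hkk ▸ hrb]
    have habs : |θ a - θ b| < δ := by
      rcases lt_or_ge (θ m) (θ a) with h | h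
      · have h' : θ m < θ b := by rw [← hbool]; exact h
        have : |θ a - θ m| = θ a - θ m := abs_of_pos (by linarith)
        have h2 : |θ b - θ m| = θ b - θ m := abs_of_pos (by linarith)
        calc |θ a - θ b| = |(|θ a - θ m|) - (|θ b - θ m|)| := by rw [this, h2]; ring_nf
          _ < δ := hdiff
      · have h' : ¬ (θ m < θ b) := by rw [← hbool]; exact not_lt.mpr h
        have h'' : θ b ≤ θ m := not_lt.mp h'
        have : |θ a - θ m| = θ m - θ a := by rw [abs_sub_comm]; exact abs_of_nonneg (by linarith)
        have h2 : |θ b - θ m| = θ m - θ b := by rw [abs_sub_comm]; exact abs_of_nonneg (by linarith)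
        calc |θ a - θ b| = |(|θ b - θ m|) - (|θ a - θ m|)| := by rw [this, h2]; ring_nf
          _ = |(|θ a - θ m|) - (|θ b - θ m|)| := abs_sub_comm _ _
          _ < δ := hdiff
    linarith
  -- sums
  set K := s.sup k with hK
  have step2 : ∑ n ∈ s, g (f n) = ∑ p ∈ s.image f, g p := (Finset.sum_image (fun a ha b hb h => hinj ha hb h)).symm
  have hsub : s.image f ⊆ Finset.range (K+1) ×ˢ Finset.univ := by
    intro p hp
    obtain ⟨n, hn, rfl⟩ := Finset.mem_image.mp hp
    refine Finset.mem_product.mpr ⟨?_, Finset.mem_univ _⟩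
    simp only [hf, Finset.mem_range]
    exact Nat.lt_succ_of_le (Finset.le_sup hn)
  have hgnn : ∀ p : ℕ × Bool, 0 ≤ g p := by
    intro p
    rw [hg]
    dsimp only
    split <;> positivity
  have step3 : ∑ p ∈ s.image f, g p ≤ ∑ p ∈ Finset.range (K+1) ×ˢ Finset.univ, g p :=
    Finset.sum_le_sum_of_subset_of_nonneg hsub (fun p _ _ => hgnn p)
  have step4 : ∑ p ∈ Finset.range (K+1) ×ˢ Finset.univ, g p ≤ 4/δ^2 := by
    rw [Finset.sum_product]
    have hb : ∀ i : ℕ, ∑ b : Bool, g (i, b) = 2 * (if i = 0 then 0 else (1/δ^2) * (1/(i:ℝ)^2)) := by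
      intro i
      rw [hg]
      simp only [Fintype.sum_bool]
      split <;> ring
    rw [Finset.sum_congr rfl (fun i _ => hb i), ← Finset.mul_sum]
    have : ∑ i ∈ Finset.range (K+1), (if i = 0 then (0:ℝ) else (1/δ^2) * (1/(i:ℝ)^2))
        = (1/δ^2) * ∑ j ∈ Finset.range K, 1/((j:ℝ)+1)^2 := by
      rw [Finset.sum_range_succ', Finset.mul_sum]
      simp only [Nat.succ_ne_zero, if_false, if_pos rfl, Nat.add_eq_zero, Nat.cast_add,
        Nat.cast_one, add_zero, and_false, one_ne_zero]
      push_cast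
      ring_nf
    rw [this]
    have hsum := sum_inv_sq K
    have h2 : (0:ℝ) < δ^2 := by positivity
    calc 2 * ((1/δ^2) * ∑ j ∈ Finset.range K, 1/((j:ℝ)+1)^2) ≤ 2 * ((1/δ^2) * 2) := by
          apply mul_le_mul_of_nonneg_left _ (by norm_num)
          apply mul_le_mul_of_nonneg_left hsum (by positivity)
      _ = 4/δ^2 := by ring
  calc ∑ n ∈ s, 1/(θ m - θ n)^2 ≤ ∑ n ∈ s, g (f n) := Finset.sum_le_sum step1
    _ = ∑ p ∈ s.image f, g p := step2
    _ ≤ ∑ p ∈ Finset.range (K+1) ×ˢ Finset.univ, g p := step3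
    _ ≤ 4/δ^2 := step4



open Real intervalIntegral

lemma fejer_cont (L a : ℝ) : Continuous (fun t : ℝ => (1 - |t|/L) * Real.cos (a*t)) := by
  fun_prop

lemma fejer_pos_part (L a : ℝ) (hL : 0 < L) (ha : a ≠ 0) :
    ∫ t in (0:ℝ)..L, (1 - |t|/L) * Real.cos (a*t) = (1 - Real.cos (a*L))/(a^2*L) := by
  have hcongr : ∫ t in (0:ℝ)..L, (1 - |t|/L) * Real.cos (a*t)
      = ∫ t in (0:ℝ)..L, (1 - t/L) * Real.cos (a*t) := by
    apply intervalIntegral.integral_congr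
    intro t ht
    rw [Set.uIcc_of_le hL.le] at ht
    simp only [abs_of_nonneg ht.1]
  rw [hcongr]
  have hderiv : ∀ t ∈ Set.uIcc (0:ℝ) L, HasDerivAt
      (fun t => (1 - t/L) * (Real.sin (a*t)/a) - Real.cos (a*t)/(a^2*L))
      ((1 - t/L) * Real.cos (a*t)) t := by
    intro t _
    have h1 : HasDerivAt (fun t : ℝ => 1 - t/L) (-(1/L)) t := by
      simpa using ((hasDerivAt_id t).div_const L).const_sub 1
    have h2 : HasDerivAt (fun t : ℝ => Real.sin (a*t)) (Real.cos (a*t) * a) t := by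
      simpa [Function.comp_def] using (Real.hasDerivAt_sin (a*t)).comp t ((hasDerivAt_id t).const_mul a)
    have h3 : HasDerivAt (fun t : ℝ => Real.cos (a*t)) (-Real.sin (a*t) * a) t := by
      simpa [Function.comp_def] using (Real.hasDerivAt_cos (a*t)).comp t ((hasDerivAt_id t).const_mul a)
    have := (h1.mul (h2.div_const a)).sub ((h3.div_const (a^2*L)))
    refine this.congr_deriv ?_
    field_simp
    ring
  have hint : IntervalIntegrable (fun t => (1 - t/L) * Real.cos (a*t)) MeasureTheory.volume 0 L := by
    apply Continuous.intervalIntegrable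
    fun_prop
  rw [intervalIntegral.integral_eq_sub_of_hasDerivAt hderiv hint]
  simp
  field_simp
  ring

lemma fejer_neg_part (L a : ℝ) (hL : 0 < L) (ha : a ≠ 0) :
    ∫ t in (-L)..(0:ℝ), (1 - |t|/L) * Real.cos (a*t) = (1 - Real.cos (a*L))/(a^2*L) := by
  have hcongr : ∫ t in (-L)..(0:ℝ), (1 - |t|/L) * Real.cos (a*t)
      = ∫ t in (-L)..(0:ℝ), (1 + t/L) * Real.cos (a*t) := by
    apply intervalIntegral.integral_congr
    intro t ht
    rw [Set.uIcc_of_le (by linarith : -L ≤ (0:ℝ))] at ht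
    simp only [abs_of_nonpos ht.2]
    ring_nf
  rw [hcongr]
  have hderiv : ∀ t ∈ Set.uIcc (-L) (0:ℝ), HasDerivAt
      (fun t => (1 + t/L) * (Real.sin (a*t)/a) + Real.cos (a*t)/(a^2*L))
      ((1 + t/L) * Real.cos (a*t)) t := by
    intro t _
    have h1 : HasDerivAt (fun t : ℝ => 1 + t/L) (1/L) t := by
      simpa using ((hasDerivAt_id t).div_const L).const_add 1
    have h2 : HasDerivAt (fun t : ℝ => Real.sin (a*t)) (Real.cos (a*t) * a) t := by
      simpa [Function.comp_def] using (Real.hasDerivAt_sin (a*t)).comp t ((hasDerivAt_id t).const_mul a)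
    have h3 : HasDerivAt (fun t : ℝ => Real.cos (a*t)) (-Real.sin (a*t) * a) t := by
      simpa [Function.comp_def] using (Real.hasDerivAt_cos (a*t)).comp t ((hasDerivAt_id t).const_mul a)
    have := (h1.mul (h2.div_const a)).add ((h3.div_const (a^2*L)))
    refine this.congr_deriv ?_
    field_simp
    ring
  have hint : IntervalIntegrable (fun t => (1 + t/L) * Real.cos (a*t)) MeasureTheory.volume (-L) 0 := by
    apply Continuous.intervalIntegrable
    fun_prop
  rw [intervalIntegral.integral_eq_sub_of_hasDerivAt hderiv hint]
  have : a * -L = -(a*L) := by ring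
  simp [this, Real.sin_neg, Real.cos_neg]
  field_simp
  ring

lemma fejer_int (L a : ℝ) (hL : 0 < L) (ha : a ≠ 0) :
    ∫ t in (-L)..L, (1 - |t|/L) * Real.cos (a*t) = 2*(1 - Real.cos (a*L))/(a^2*L) := by
  have h := intervalIntegral.integral_add_adjacent_intervals
    (a := -L) (b := 0) (c := L) (f := fun t => (1 - |t|/L) * Real.cos (a*t))
    ((fejer_cont L a).intervalIntegrable (μ := MeasureTheory.volume) _ _) ((fejer_cont L a).intervalIntegrable (μ := MeasureTheory.volume) _ _)
  rw [← h, fejer_pos_part L a hL ha, fejer_neg_part L a hL ha]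
  ring

lemma fejer_int_zero (L : ℝ) (hL : 0 < L) :
    ∫ t in (-L)..L, (1 - |t|/L) = L := by
  have h := intervalIntegral.integral_add_adjacent_intervals
    (a := -L) (b := 0) (c := L) (f := fun t : ℝ => 1 - |t|/L)
    (by apply Continuous.intervalIntegrable (μ := MeasureTheory.volume); fun_prop)
    (by apply Continuous.intervalIntegrable (μ := MeasureTheory.volume); fun_prop)
  have hp : ∫ t in (0:ℝ)..L, (1 - |t|/L) = L/2 := by
    have hc : ∫ t in (0:ℝ)..L, (1 - |t|/L) = ∫ t in (0:ℝ)..L, (1 - t/L) := by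
      apply intervalIntegral.integral_congr
      intro t ht
      rw [Set.uIcc_of_le hL.le] at ht
      simp only [abs_of_nonneg ht.1]
    rw [hc]
    have hderiv : ∀ t ∈ Set.uIcc (0:ℝ) L, HasDerivAt (fun t => t - t^2/(2*L)) (1 - t/L) t := by
      intro t _
      have := (hasDerivAt_id t).sub ((((hasDerivAt_id t).pow 2)).div_const (2*L))
      refine this.congr_deriv ?_
      field_simp
      simp only [id]
      ring
    rw [intervalIntegral.integral_eq_sub_of_hasDerivAt hderiv
      (by apply Continuous.intervalIntegrable; fun_prop)]
    field_simp
    ring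
  have hn : ∫ t in (-L)..(0:ℝ), (1 - |t|/L) = L/2 := by
    have hc : ∫ t in (-L)..(0:ℝ), (1 - |t|/L) = ∫ t in (-L)..(0:ℝ), (1 + t/L) := by
      apply intervalIntegral.integral_congr
      intro t ht
      rw [Set.uIcc_of_le (by linarith : -L ≤ (0:ℝ))] at ht
      simp only [abs_of_nonpos ht.2]
      ring_nf
    rw [hc]
    have hderiv : ∀ t ∈ Set.uIcc (-L) (0:ℝ), HasDerivAt (fun t => t + t^2/(2*L)) (1 + t/L) t := by
      intro t _
      have := (hasDerivAt_id t).add ((((hasDerivAt_id t).pow 2)).div_const (2*L))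
      refine this.congr_deriv ?_
      field_simp
      simp only [id]
      ring
    rw [intervalIntegral.integral_eq_sub_of_hasDerivAt hderiv
      (by apply Continuous.intervalIntegrable; fun_prop)]
    field_simp
    ring
  rw [← h, hp, hn]
  ring


open Real Finset

lemma norm_exp_sum_sq {R : ℕ} (θ : Fin R → ℝ) (t : ℝ) :
    ‖∑ n, Complex.exp (2 * Real.pi * Complex.I * t * θ n)‖ ^ 2
      = ∑ m, ∑ n, Real.cos (2*Real.pi*(θ m - θ n)*t) := by
  have hexp : ∀ n : Fin R, Complex.exp (2 * Real.pi * Complex.I * t * θ n)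
      = Complex.cos (2*Real.pi*t*θ n) + Complex.sin (2*Real.pi*t*θ n) * Complex.I := by
    intro n
    rw [← Complex.exp_mul_I]
    congr 1
    push_cast
    ring
  have hsum : ∑ n, Complex.exp (2 * Real.pi * Complex.I * t * θ n)
      = (↑(∑ n, Real.cos (2*Real.pi*t*θ n)) : ℂ) + (↑(∑ n, Real.sin (2*Real.pi*t*θ n)) : ℂ) * Complex.I := by
    rw [Finset.sum_congr rfl (fun n _ => hexp n)]
    push_cast
    rw [Finset.sum_add_distrib, Finset.sum_mul]
  rw [hsum]
  rw [Complex.norm_add_mul_I, Real.sq_sqrt (by positivity)]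
  have : ∀ m n : Fin R, Real.cos (2*Real.pi*(θ m - θ n)*t)
      = Real.cos (2*Real.pi*t*θ m) * Real.cos (2*Real.pi*t*θ n)
        + Real.sin (2*Real.pi*t*θ m) * Real.sin (2*Real.pi*t*θ n) := by
    intro m n
    rw [show 2*Real.pi*(θ m - θ n)*t = (2*Real.pi*t*θ m) - (2*Real.pi*t*θ n) by ring]
    exact Real.cos_sub _ _
  rw [Finset.sum_congr rfl (fun m _ => Finset.sum_congr rfl (fun n _ => this m n))]
  rw [Finset.sum_congr rfl (fun m _ => (Finset.sum_add_distrib (s := Finset.univ)))]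
  rw [Finset.sum_add_distrib]
  rw [Finset.sum_congr rfl (fun m (_: m ∈ Finset.univ) => (Finset.mul_sum Finset.univ (fun n => Real.cos (2*Real.pi*t*θ n)) (Real.cos (2*Real.pi*t*θ m))).symm), ← Finset.sum_mul]
  rw [Finset.sum_congr rfl (fun m (_: m ∈ Finset.univ) => (Finset.mul_sum Finset.univ (fun n => Real.sin (2*Real.pi*t*θ n)) (Real.sin (2*Real.pi*t*θ m))).symm), ← Finset.sum_mul]
  ring


open Real Finset MeasureTheory

lemma log_sep {H X a b : ℝ} (hH : 1 ≤ H) (ha : 1 ≤ a) (hab : a ≤ b) (hbX : b ≤ X)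
    (hsep : H ≤ b - a) : H/X ≤ Real.log b - Real.log a := by
  have ha0 : (0:ℝ) < a := by linarith
  have hb0 : (0:ℝ) < b := by linarith
  have hX0 : (0:ℝ) < X := by linarith
  have h1 : Real.log (a/b) ≤ a/b - 1 := Real.log_le_sub_one_of_pos (by positivity)
  rw [Real.log_div (ne_of_gt ha0) (ne_of_gt hb0)] at h1
  have h2 : H/X ≤ (b-a)/b := by
    calc H/X ≤ H/b := by gcongr
      _ ≤ (b-a)/b := by gcongr
  have h3 : (b-a)/b = 1 - a/b := by field_simp
  linarith [h3 ▸ h2]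


open MeasureTheory in
/-- a variant of the large sieve for `H`-separated points. -/
theorem stmt3 :
    ∃ C : ℝ, 0 < C ∧ ∀ (H X : ℝ) (R : ℕ) (x : Fin R → ℝ),
      1 ≤ H → H ≤ X →
      (∀ i, 1 ≤ x i ∧ x i ≤ X) →
      (∀ i j, i ≠ j → H ≤ |x i - x j|) →
      (∫ t in (-(X / H))..(X / H),
        ‖∑ n, Complex.exp (2 * Real.pi * Complex.I * t * Real.log (x n))‖ ^ 2)
        ≤ C * R * (X / H) := by
  refine ⟨100, by norm_num, ?_⟩
  intro H X R x hH hHX hx hsep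
  have hH0 : (0:ℝ) < H := lt_of_lt_of_le one_pos hH
  have hX0 : (0:ℝ) < X := lt_of_lt_of_le hH0 hHX
  set T := X / H with hTdef
  have hT1 : (1:ℝ) ≤ T := (one_le_div hH0).mpr hHX
  have hT0 : (0:ℝ) < T := lt_of_lt_of_le one_pos hT1
  set θ : Fin R → ℝ := fun n => Real.log (x n) with hθ
  set δ := H / X with hδdef
  have hδ0 : (0:ℝ) < δ := div_pos hH0 hX0
  have hδT : δ = 1/T := by rw [hδdef, hTdef]; field_simp
  have hsepθ : ∀ i j, i ≠ j → δ ≤ |θ i - θ j| := by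
    intro i j hij
    rcases le_total (x i) (x j) with hle | hle
    · have h1 : H ≤ x j - x i := by
        have := hsep i j hij
        rwa [abs_sub_comm, abs_of_nonneg (by linarith)] at this
      have h2 := log_sep hH (hx i).1 hle (hx j).2 h1
      calc δ ≤ Real.log (x j) - Real.log (x i) := h2
        _ ≤ |θ i - θ j| := by
            rw [hθ, abs_sub_comm]
            exact le_abs_self _
    · have h1 : H ≤ x i - x j := by
        have := hsep i j hij
        rwa [abs_of_nonneg (by linarith)] at this
      have h2 := log_sep hH (hx j).1 hle (hx i).2 h1
      calc δ ≤ Real.log (x i) - Real.log (x j) := h2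
        _ ≤ |θ i - θ j| := le_abs_self _
  set L := 2 * T with hLdef
  have hL0 : (0:ℝ) < L := by positivity
  set G : ℝ → ℝ := fun t => ∑ m, ∑ n, Real.cos (2*Real.pi*(θ m - θ n)*t) with hG
  have hFG : ∀ t : ℝ, ‖∑ n, Complex.exp (2 * Real.pi * Complex.I * t * θ n)‖ ^ 2 = G t :=
    fun t => norm_exp_sum_sq θ t
  have hGcont : Continuous G := by
    rw [hG]
    apply continuous_finset_sum
    intro m _
    apply continuous_finset_sum
    intro n _
    fun_prop
  have hG0 : ∀ t, 0 ≤ G t := fun t => (hFG t) ▸ (by positivity)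
  have hgoal : (∫ t in (-T)..T,
      ‖∑ n, Complex.exp (2 * Real.pi * Complex.I * t * Real.log (x n))‖ ^ 2)
      = ∫ t in (-T)..T, G t :=
    intervalIntegral.integral_congr (fun t _ => hFG t)
  rw [hgoal]
  have hGint : ∀ a b : ℝ, IntervalIntegrable G volume a b :=
    fun a b => hGcont.intervalIntegrable a b
  have hwGcont : Continuous (fun t => 2 * ((1 - |t|/L) * G t)) := by fun_prop
  have hA1 : (∫ t in (-T)..T, G t) ≤ ∫ t in (-T)..T, 2 * ((1 - |t|/L) * G t) := by
    apply intervalIntegral.integral_mono_on (by linarith) (hGint _ _)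
      (hwGcont.intervalIntegrable _ _)
    intro t ht
    have h1 : |t| ≤ T := abs_le.mpr ⟨ht.1, ht.2⟩
    have h2 : |t|/L ≤ 1/2 := by
      rw [hLdef, div_le_div_iff₀ (by positivity) (by norm_num)]
      linarith
    nlinarith [hG0 t, abs_nonneg t]
  have hA2 : (∫ t in (-T)..T, 2 * ((1 - |t|/L) * G t))
      ≤ ∫ t in (-L)..L, 2 * ((1 - |t|/L) * G t) := by
    apply intervalIntegral.integral_mono_interval (by rw [hLdef]; linarith) (by linarith)
      (by rw [hLdef]; linarith) _ (hwGcont.intervalIntegrable _ _)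
    apply MeasureTheory.ae_restrict_of_forall_mem measurableSet_Ioc
    intro t ht
    have h1 : |t| ≤ L := abs_le.mpr ⟨ht.1.le, ht.2⟩
    have h2 : 0 ≤ 1 - |t|/L := by
      rw [sub_nonneg, div_le_one hL0]
      exact h1
    have := hG0 t
    positivity
  have hpull : (∫ t in (-L)..L, 2 * ((1 - |t|/L) * G t))
      = 2 * ∫ t in (-L)..L, (1 - |t|/L) * G t :=
    intervalIntegral.integral_const_mul 2 _
  have hexpand : (∫ t in (-L)..L, (1 - |t|/L) * G t)
      = ∑ m, ∑ n, ∫ t in (-L)..L, (1 - |t|/L) * Real.cos (2*Real.pi*(θ m - θ n)*t) := by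
    have h1 : ∀ t : ℝ, (1 - |t|/L) * G t
        = ∑ m, ∑ n, (1 - |t|/L) * Real.cos (2*Real.pi*(θ m - θ n)*t) := by
      intro t
      rw [hG]
      simp only [Finset.mul_sum]
    rw [intervalIntegral.integral_congr (fun t _ => h1 t)]
    rw [intervalIntegral.integral_finset_sum]
    · refine Finset.sum_congr rfl fun m _ => ?_
      rw [intervalIntegral.integral_finset_sum]
      intro n _
      exact (fejer_cont L _).intervalIntegrable _ _
    · intro m _
      apply Continuous.intervalIntegrable
      apply continuous_finset_sum
      intro n _
      exact fejer_cont L _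
  have hbound : ∀ m : Fin R,
      (∑ n, ∫ t in (-L)..L, (1 - |t|/L) * Real.cos (2*Real.pi*(θ m - θ n)*t)) ≤ 3 * T := by
    intro m
    rw [← Finset.add_sum_erase _ _ (Finset.mem_univ m)]
    have hdiag : (∫ t in (-L)..L, (1 - |t|/L) * Real.cos (2*Real.pi*(θ m - θ m)*t)) = L := by
      have h0 : ∀ t : ℝ, (1 - |t|/L) * Real.cos (2*Real.pi*(θ m - θ m)*t) = (1 - |t|/L) := by
        intro t
        simp
      rw [intervalIntegral.integral_congr (fun t _ => h0 t)]
      exact fejer_int_zero L hL0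
    have hoff : (∑ n ∈ Finset.univ.erase m,
        ∫ t in (-L)..L, (1 - |t|/L) * Real.cos (2*Real.pi*(θ m - θ n)*t)) ≤ T := by
      have hterm : ∀ n ∈ Finset.univ.erase m,
          (∫ t in (-L)..L, (1 - |t|/L) * Real.cos (2*Real.pi*(θ m - θ n)*t))
            ≤ (1/(Real.pi^2*L)) * (1/(θ m - θ n)^2) := by
        intro n hn
        have hne : n ≠ m := Finset.ne_of_mem_erase hn
        have hd : δ ≤ |θ m - θ n| := hsepθ m n (Ne.symm hne)
        have hd0 : θ m - θ n ≠ 0 := by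
          intro h
          rw [h, abs_zero] at hd
          linarith
        have ha : 2*Real.pi*(θ m - θ n) ≠ 0 := by
          apply mul_ne_zero (by positivity) hd0
        rw [fejer_int L _ hL0 ha]
        have hcos : -1 ≤ Real.cos (2*Real.pi*(θ m - θ n)*L) := Real.neg_one_le_cos _
        have hd2 : (0:ℝ) < (θ m - θ n)^2 := by positivity
        calc 2*(1 - Real.cos (2*Real.pi*(θ m - θ n)*L))/((2*Real.pi*(θ m - θ n))^2*L)
            ≤ 4/((2*Real.pi*(θ m - θ n))^2*L) := by
              apply div_le_div_of_nonneg_right _ (by positivity)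
              linarith
          _ = (1/(Real.pi^2*L)) * (1/(θ m - θ n)^2) := by
              field_simp
              ring
      calc (∑ n ∈ Finset.univ.erase m,
          ∫ t in (-L)..L, (1 - |t|/L) * Real.cos (2*Real.pi*(θ m - θ n)*t))
          ≤ ∑ n ∈ Finset.univ.erase m, (1/(Real.pi^2*L)) * (1/(θ m - θ n)^2) :=
            Finset.sum_le_sum hterm
        _ = (1/(Real.pi^2*L)) * ∑ n ∈ Finset.univ.erase m, 1/(θ m - θ n)^2 :=
            (Finset.mul_sum _ _ _).symm
        _ ≤ (1/(Real.pi^2*L)) * (4/δ^2) := by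
            have := offdiag_sum θ δ hδ0 hsepθ m
            have hp : (0:ℝ) ≤ 1/(Real.pi^2*L) := by positivity
            exact mul_le_mul_of_nonneg_left this hp
        _ ≤ T := by
            rw [hδT, hLdef]
            have hpi : (3:ℝ) < Real.pi := Real.pi_gt_three
            have he : 4/((1/T)^2) = 4*T^2 := by field_simp
            rw [he, div_mul_eq_mul_div, one_mul, div_le_iff₀ (by positivity)]
            nlinarith [mul_pos hT0 hT0, sq_nonneg (Real.pi - 3), hpi]
    rw [hdiag, hLdef]
    linarith
  have htotal : (∑ m, ∑ n, ∫ t in (-L)..L, (1 - |t|/L) * Real.cos (2*Real.pi*(θ m - θ n)*t))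
      ≤ R * (3*T) := by
    calc (∑ m, ∑ n, ∫ t in (-L)..L, (1 - |t|/L) * Real.cos (2*Real.pi*(θ m - θ n)*t))
        ≤ ∑ _m : Fin R, 3*T := Finset.sum_le_sum (fun m _ => hbound m)
      _ = R * (3*T) := by
          rw [Finset.sum_const, Finset.card_univ, Fintype.card_fin, nsmul_eq_mul]
  have hR0 : (0:ℝ) ≤ (R:ℝ) := Nat.cast_nonneg R
  calc (∫ t in (-T)..T, G t) ≤ ∫ t in (-T)..T, 2 * ((1 - |t|/L) * G t) := hA1
    _ ≤ ∫ t in (-L)..L, 2 * ((1 - |t|/L) * G t) := hA2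
    _ = 2 * ∫ t in (-L)..L, (1 - |t|/L) * G t := hpull
    _ = 2 * ∑ m, ∑ n, ∫ t in (-L)..L, (1 - |t|/L) * Real.cos (2*Real.pi*(θ m - θ n)*t) := by
        rw [hexpand]
    _ ≤ 2 * (R * (3*T)) := by linarith
    _ ≤ 100 * R * T := by nlinarith
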